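/- arXiv:1503.00767 — 3 statements merged into one kernel-verified Lean document; each statement's English description precedes it below -/
import Mathlib

section
/- Let f : ℝ → ℂ be continuously differentiable and antiperiodic with period 2π, i.e. f(θ + 2π) = -f(θ) for all θ. Then (i) sup over s ∈ [0,2π] of |f(s)| is at most ∫₀^{2π} |f'(θ)| dθ, and consequently (ii) ∫₀^{2π} |f(θ)|² dθ ≤ 4π² ∫₀^{2π} |f'(θ)|² dθ. -/
open MeasureTheory intervalIntegral

theorem antiperiodic_sup_bound_and_poincare (f : ℝ → ℂ) (hf : ContDiff ℝ 1 f)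
    (hap : Function.Antiperiodic f (2 * Real.pi)) :
    (∀ s ∈ Set.Icc (0:ℝ) (2 * Real.pi),
      ‖f s‖ ≤ ∫ θ in (0:ℝ)..(2 * Real.pi), ‖deriv f θ‖) ∧
    (∫ θ in (0:ℝ)..(2 * Real.pi), ‖f θ‖ ^ 2)
      ≤ 4 * Real.pi ^ 2 * ∫ θ in (0:ℝ)..(2 * Real.pi), ‖deriv f θ‖ ^ 2 := by
  have hπ : (0:ℝ) < 2 * Real.pi := by positivity
  set T : ℝ := 2 * Real.pi with hT
  have hcd : Continuous (deriv f) := hf.continuous_deriv le_rfl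
  set g : ℝ → ℝ := fun θ => ‖deriv f θ‖ with hgdef
  have hg : Continuous g := hcd.norm
  -- deriv f is antiperiodic
  have hapd : ∀ x, deriv f (x + T) = - deriv f x := by
    intro x
    have h1 : deriv (fun y => f (y + T)) x = deriv f (x + T) :=
      deriv_comp_add_const f T x
    have h2 : (fun y => f (y + T)) = fun y => -(f y) := funext fun y => hap y
    rw [h2] at h1
    rw [← h1, deriv.fun_neg]
  have hgp : Function.Periodic g T := fun x => by
    simp only [hgdef, hapd x, norm_neg]
  set M : ℝ := ∫ θ in (0:ℝ)..T, g θ with hM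
  have hMnonneg : 0 ≤ M :=
    intervalIntegral.integral_nonneg hπ.le (fun u _ => norm_nonneg _)
  -- part (i)
  have part1 : ∀ s ∈ Set.Icc (0:ℝ) T, ‖f s‖ ≤ M := by
    intro s _
    have hftc : ∫ θ in (s - T)..s, deriv f θ = f s - f (s - T) :=
      intervalIntegral.integral_deriv_eq_sub
        (fun x _ => (hf.differentiable one_ne_zero) x) (hcd.intervalIntegrable _ _)
    have hfs : f (s - T) = - f s := by
      have := hap (s - T)
      rw [sub_add_cancel] at this
      rw [this, neg_neg]
    have h2fs : f s - f (s - T) = 2 * f s := by rw [hfs]; ring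
    have hbound : ‖f s - f (s - T)‖ ≤ ∫ θ in (s - T)..s, g θ := by
      rw [← hftc]
      exact intervalIntegral.norm_integral_le_integral_norm (by linarith)
    have hper : (∫ θ in (s - T)..s, g θ) = M := by
      have := hgp.intervalIntegral_add_eq (s - T) 0
      rw [sub_add_cancel, zero_add] at this
      rw [this]
    rw [hper, h2fs] at hbound
    have : ‖(2:ℂ) * f s‖ = 2 * ‖f s‖ := by
      rw [norm_mul]; norm_num
    rw [this] at hbound
    have := norm_nonneg (f s)
    linarith
  refine ⟨part1, ?_⟩
  -- Cauchy–Schwarz: M ^ 2 ≤ T * ∫ g ^ 2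
  set I2 : ℝ := ∫ θ in (0:ℝ)..T, g θ ^ 2 with hI2
  have hintg : IntervalIntegrable g volume 0 T := hg.intervalIntegrable _ _
  have hintg2 : IntervalIntegrable (fun θ => g θ ^ 2) volume 0 T :=
    (hg.pow 2).intervalIntegrable _ _
  have hcs : M ^ 2 ≤ T * I2 := by
    have h0 : 0 ≤ ∫ θ in (0:ℝ)..T, (T * g θ - M) ^ 2 :=
      intervalIntegral.integral_nonneg hπ.le (fun u _ => sq_nonneg _)
    have hexp : (∫ θ in (0:ℝ)..T, (T * g θ - M) ^ 2)
        = T ^ 2 * I2 - (2 * T * M) * M + M ^ 2 * (T - 0) := by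
      have hcongr : (∫ θ in (0:ℝ)..T, (T * g θ - M) ^ 2)
          = ∫ θ in (0:ℝ)..T, (T ^ 2 * g θ ^ 2 - (2 * T * M) * g θ + M ^ 2) := by
        congr 1; funext θ; ring
      rw [hcongr]
      rw [intervalIntegral.integral_add (((hintg2.const_mul _).sub (hintg.const_mul _)))
          intervalIntegrable_const,
        intervalIntegral.integral_sub (hintg2.const_mul _) (hintg.const_mul _),
        intervalIntegral.integral_const_mul, intervalIntegral.integral_const_mul,
        intervalIntegral.integral_const, smul_eq_mul, ← hI2, ← hM]
      ring
    rw [hexp] at h0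
    nlinarith [hπ]
  -- pointwise bound then integrate
  have hptw : (∫ θ in (0:ℝ)..T, ‖f θ‖ ^ 2) ≤ T * M ^ 2 := by
    have hmono : (∫ θ in (0:ℝ)..T, ‖f θ‖ ^ 2) ≤ ∫ _θ in (0:ℝ)..T, M ^ 2 := by
      apply intervalIntegral.integral_mono_on hπ.le
        ((hf.continuous.norm.pow 2).intervalIntegrable _ _) intervalIntegrable_const
      intro x hx
      exact pow_le_pow_left₀ (norm_nonneg _) (part1 x hx) 2
    rw [intervalIntegral.integral_const, smul_eq_mul, sub_zero] at hmono
    exact hmono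
  have : T * M ^ 2 ≤ T * (T * I2) := by
    exact mul_le_mul_of_nonneg_left hcs hπ.le
  calc (∫ θ in (0:ℝ)..T, ‖f θ‖ ^ 2) ≤ T * (T * I2) := le_trans hptw this
    _ = 4 * Real.pi ^ 2 * I2 := by rw [hT]; ring
end

section
/- Let R > 0 and let (u_l)_{l ∈ ℤ} be a family of complex numbers such that M := ∑_{l ∈ ℤ} |u_l|² ∫₀^R e^{2|l| r} dr is finite. Then for every natural number k, the sum ∑_{l ∈ ℤ} |l|^{2k} |u_l|² converges and is at most (2k+1)! · M / R^{2k+1}. -/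
open intervalIntegral

theorem weighted_coefficient_decay (R : ℝ) (hR : 0 < R) (u : ℤ → ℂ)
    (hM : Summable (fun l : ℤ =>
      ‖u l‖ ^ 2 * ∫ r in (0:ℝ)..R, Real.exp (2 * |(l : ℝ)| * r))) (k : ℕ) :
    Summable (fun l : ℤ => |(l : ℝ)| ^ (2 * k) * ‖u l‖ ^ 2) ∧
    (∑' l : ℤ, |(l : ℝ)| ^ (2 * k) * ‖u l‖ ^ 2)
      ≤ (Nat.factorial (2 * k + 1) : ℝ) *
          (∑' l : ℤ, ‖u l‖ ^ 2 * ∫ r in (0:ℝ)..R, Real.exp (2 * |(l : ℝ)| * r))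
        / R ^ (2 * k + 1) := by
  set C : ℝ := (Nat.factorial (2 * k + 1) : ℝ) / R ^ (2 * k + 1) with hC
  have hRp : (0:ℝ) < R ^ (2 * k + 1) := pow_pos hR _
  have hfac : (0:ℝ) < (Nat.factorial (2 * k + 1) : ℝ) := by
    exact_mod_cast Nat.factorial_pos _
  -- key pointwise bound
  have key : ∀ l : ℤ, |(l : ℝ)| ^ (2 * k) * ‖u l‖ ^ 2 ≤
      C * (‖u l‖ ^ 2 * ∫ r in (0:ℝ)..R, Real.exp (2 * |(l : ℝ)| * r)) := by
    intro l
    set a : ℝ := |(l : ℝ)| with ha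
    have ha0 : 0 ≤ a := abs_nonneg _
    -- integral lower bound
    have hmono : ∫ r in (0:ℝ)..R, a ^ (2 * k) / (2 * k).factorial * r ^ (2 * k)
        ≤ ∫ r in (0:ℝ)..R, Real.exp (2 * a * r) := by
      apply intervalIntegral.integral_mono_on hR.le
      · exact (IntervalIntegrable.const_mul (intervalIntegral.intervalIntegrable_pow _) _)
      · exact (Real.continuous_exp.comp (continuous_const.mul continuous_id)).intervalIntegrable _ _
      · intro r hr
        have hr0 : 0 ≤ r := hr.1
        have h1 : (2 * a * r) ^ (2 * k) / (2 * k).factorial ≤ Real.exp (2 * a * r) :=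
          Real.pow_div_factorial_le_exp (x := 2 * a * r) (by positivity) _
        refine le_trans ?_ h1
        rw [div_mul_eq_mul_div]
        gcongr
        calc a ^ (2 * k) * r ^ (2 * k) = (a * r) ^ (2 * k) := (mul_pow _ _ _).symm
          _ ≤ (2 * a * r) ^ (2 * k) := by
              apply pow_le_pow_left₀ (by positivity)
              nlinarith [mul_nonneg ha0 hr0]
    have hcomp : ∫ r in (0:ℝ)..R, a ^ (2 * k) / (2 * k).factorial * r ^ (2 * k)
        = a ^ (2 * k) * R ^ (2 * k + 1) / (2 * k + 1).factorial := by
      rw [intervalIntegral.integral_const_mul, integral_pow, zero_pow (by omega), sub_zero,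
        Nat.factorial_succ]
      have h2 : ((2 * k).factorial : ℝ) ≠ 0 := by positivity
      have h3 : (2 * k + 1 : ℝ) ≠ 0 := by positivity
      push_cast
      field_simp
    rw [hcomp] at hmono
    -- now rearrange
    have hI0 : 0 ≤ ∫ r in (0:ℝ)..R, Real.exp (2 * a * r) :=
      le_trans (by positivity) hmono
    have hakey : a ^ (2 * k) ≤ C * ∫ r in (0:ℝ)..R, Real.exp (2 * a * r) := by
      rw [hC, div_mul_eq_mul_div, le_div_iff₀ hRp]
      rw [div_le_iff₀ (by positivity : (0:ℝ) < ((2*k+1).factorial : ℝ))] at hmono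
      linarith [hmono]
    calc a ^ (2 * k) * ‖u l‖ ^ 2
        ≤ (C * ∫ r in (0:ℝ)..R, Real.exp (2 * a * r)) * ‖u l‖ ^ 2 :=
          mul_le_mul_of_nonneg_right hakey (by positivity)
      _ = C * (‖u l‖ ^ 2 * ∫ r in (0:ℝ)..R, Real.exp (2 * a * r)) := by ring
  have hS : Summable (fun l : ℤ => C *
      (‖u l‖ ^ 2 * ∫ r in (0:ℝ)..R, Real.exp (2 * |(l : ℝ)| * r))) := hM.mul_left C
  have hsum : Summable (fun l : ℤ => |(l : ℝ)| ^ (2 * k) * ‖u l‖ ^ 2) :=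
    Summable.of_nonneg_of_le (fun l => by positivity) key hS
  refine ⟨hsum, ?_⟩
  calc (∑' l : ℤ, |(l : ℝ)| ^ (2 * k) * ‖u l‖ ^ 2)
      ≤ ∑' l : ℤ, C * (‖u l‖ ^ 2 * ∫ r in (0:ℝ)..R, Real.exp (2 * |(l : ℝ)| * r)) :=
        Summable.tsum_le_tsum key hsum hS
    _ = C * ∑' l : ℤ, ‖u l‖ ^ 2 * ∫ r in (0:ℝ)..R, Real.exp (2 * |(l : ℝ)| * r) :=
        tsum_mul_left
    _ = _ := by rw [hC]; ring
end

section
/- Let R > 0, κ ∈ ℝ, M ≥ 0, and let ρ : (0, R] → ℝ be positive and differentiable with ρ'(r) = α(r) ρ(r) for some function α satisfying |α(r) − κ/r| ≤ M r for all r ∈ (0, R]. Then for all r ∈ (0, R]: ρ(R) R^{-κ} e^{-M R²/2} · r^{κ} ≤ ρ(r) ≤ ρ(R) R^{-κ} e^{M R²/2} · r^{κ}. -/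
theorem gronwall_power_comparison (R : ℝ) (hR : 0 < R) (κ M : ℝ) (hM : 0 ≤ M)
    (ρ α : ℝ → ℝ)
    (hpos : ∀ r ∈ Set.Ioc (0:ℝ) R, 0 < ρ r)
    (hderiv : ∀ r ∈ Set.Ioc (0:ℝ) R, HasDerivAt ρ (α r * ρ r) r)
    (hα : ∀ r ∈ Set.Ioc (0:ℝ) R, |α r - κ / r| ≤ M * r) :
    ∀ r ∈ Set.Ioc (0:ℝ) R,
      ρ R * R ^ (-κ) * Real.exp (-(M * R ^ 2) / 2) * r ^ κ ≤ ρ r ∧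
      ρ r ≤ ρ R * R ^ (-κ) * Real.exp (M * R ^ 2 / 2) * r ^ κ := by
  set g : ℝ → ℝ := fun s => Real.log (ρ s) - κ * Real.log s with hgdef
  have hg : ∀ s ∈ Set.Ioc (0:ℝ) R, HasDerivAt g (α s - κ / s) s := by
    intro s hs
    have h1 : HasDerivAt (fun s => Real.log (ρ s)) (α s * ρ s / ρ s) s :=
      (hderiv s hs).log (hpos s hs).ne'
    rw [mul_div_assoc, div_self (hpos s hs).ne', mul_one] at h1
    have h2 : HasDerivAt (fun s => κ * Real.log s) (κ * s⁻¹) s :=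
      (Real.hasDerivAt_log hs.1.ne').const_mul κ
    have := h1.sub h2
    rw [div_eq_mul_inv]
    exact this
  intro r hr
  have hrR : Set.Icc r R ⊆ Set.Ioc (0:ℝ) R := fun x hx => ⟨lt_of_lt_of_le hr.1 hx.1, hx.2⟩
  have hIoo : Set.Ioo r R ⊆ Set.Ioc (0:ℝ) R := fun x hx => ⟨lt_trans hr.1 hx.1, le_of_lt hx.2⟩
  -- φ = g + M s²/2 is monotone on [r, R]
  have hφderiv : ∀ s ∈ Set.Ioc (0:ℝ) R,
      HasDerivAt (fun s => g s + M * s ^ 2 / 2) (α s - κ / s + M * s) s := by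
    intro s hs
    have h2 : HasDerivAt (fun s : ℝ => M * s ^ 2 / 2) (M * s) s := by
      have := ((hasDerivAt_pow 2 s).const_mul M).div_const 2
      refine this.congr_deriv ?_
      ring
    exact (hg s hs).add h2
  have hψderiv : ∀ s ∈ Set.Ioc (0:ℝ) R,
      HasDerivAt (fun s => g s - M * s ^ 2 / 2) (α s - κ / s - M * s) s := by
    intro s hs
    have h2 : HasDerivAt (fun s : ℝ => M * s ^ 2 / 2) (M * s) s := by
      have := ((hasDerivAt_pow 2 s).const_mul M).div_const 2
      refine this.congr_deriv ?_
      ring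
    exact (hg s hs).sub h2
  have hcontg : ContinuousOn g (Set.Icc r R) := fun x hx =>
    ((hg x (hrR hx)).continuousAt).continuousWithinAt
  have hφmono : MonotoneOn (fun s => g s + M * s ^ 2 / 2) (Set.Icc r R) := by
    apply monotoneOn_of_deriv_nonneg (convex_Icc r R)
    · exact hcontg.add ((continuous_const.mul (continuous_pow 2)).div_const 2).continuousOn
    · intro x hx
      rw [interior_Icc] at hx
      exact (hφderiv x (hIoo hx)).differentiableAt.differentiableWithinAt
    · intro x hx
      rw [interior_Icc] at hx
      rw [(hφderiv x (hIoo hx)).deriv]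
      have := abs_le.1 (hα x (hIoo hx))
      linarith [this.1]
  have hψanti : AntitoneOn (fun s => g s - M * s ^ 2 / 2) (Set.Icc r R) := by
    apply antitoneOn_of_deriv_nonpos (convex_Icc r R)
    · exact hcontg.sub ((continuous_const.mul (continuous_pow 2)).div_const 2).continuousOn
    · intro x hx
      rw [interior_Icc] at hx
      exact (hψderiv x (hIoo hx)).differentiableAt.differentiableWithinAt
    · intro x hx
      rw [interior_Icc] at hx
      rw [(hψderiv x (hIoo hx)).deriv]
      have := abs_le.1 (hα x (hIoo hx))
      linarith [this.2]
  have hrIcc : r ∈ Set.Icc r R := ⟨le_refl r, hr.2⟩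
  have hRIcc : R ∈ Set.Icc r R := ⟨hr.2, le_refl R⟩
  have hup : g r ≤ g R + M * R ^ 2 / 2 := by
    have := hφmono hrIcc hRIcc hr.2
    nlinarith [sq_nonneg r, hr.1]
  have hlo : g R - M * R ^ 2 / 2 ≤ g r := by
    have := hψanti hrIcc hRIcc hr.2
    nlinarith [sq_nonneg r, hr.1]
  have hρr : ρ r = Real.exp (g r) * r ^ κ := by
    rw [Real.rpow_def_of_pos hr.1, ← Real.exp_add, hgdef]
    simp only
    rw [show Real.log (ρ r) - κ * Real.log r + Real.log r * κ = Real.log (ρ r) by ring,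
      Real.exp_log (hpos r hr)]
  have hRin : R ∈ Set.Ioc (0:ℝ) R := ⟨hR, le_refl R⟩
  have hρR : ∀ c : ℝ, ρ R * R ^ (-κ) * Real.exp c = Real.exp (g R + c) := by
    intro c
    rw [Real.rpow_def_of_pos hR, ← Real.exp_log (hpos R hRin), ← Real.exp_add, ← Real.exp_add,
      hgdef]
    ring_nf
  have hrpow : (0:ℝ) < r ^ κ := Real.rpow_pos_of_pos hr.1 κ
  constructor
  · rw [hρR, hρr]
    apply mul_le_mul_of_nonneg_right _ hrpow.le
    rw [Real.exp_le_exp]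
    linarith
  · rw [hρR, hρr]
    apply mul_le_mul_of_nonneg_right _ hrpow.le
    rw [Real.exp_le_exp]
    linarith
end
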